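/- arXiv:1601.07139 — 3 statements merged into one kernel-verified Lean document; each statement's English description precedes it below -/
import Mathlib

section
/- Let γ : I → M and γ' : I' → M be injective analytic immersive curves from open real intervals into an analytic manifold M that are embeddings onto their images. Suppose there exist sequences (t_n) in I \ {t} converging to t ∈ I and (t'_n) in I' \ {t'} converging to t' ∈ I' with γ(t_n) = γ'(t'_n) for all n. Then there exist open subintervals J ⊆ I and J' ⊆ I' with t ∈ J and t' ∈ J' such that γ(J) = γ'(J'). -/
open Topology Filter


lemma image_Ioo_of_deriv_pos' {g : ℝ → ℝ} {a b : ℝ} (hab : a ≤ b)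
    (hc : ContinuousOn g (Set.Icc a b))
    (hd : ∀ x ∈ Set.Ioo a b, 0 < deriv g x) :
    g '' Set.Ioo a b = Set.Ioo (g a) (g b) := by
  have hmono : StrictMonoOn g (Set.Icc a b) := by
    apply strictMonoOn_of_deriv_pos (convex_Icc a b) hc
    rwa [interior_Icc]
  apply Set.Subset.antisymm
  · rintro _ ⟨x, hx, rfl⟩
    exact ⟨hmono (Set.left_mem_Icc.2 hab) (Set.mem_Icc_of_Ioo hx) hx.1,
      hmono (Set.mem_Icc_of_Ioo hx) (Set.right_mem_Icc.2 hab) hx.2⟩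
  · exact intermediate_value_Ioo hab hc

lemma image_Ioo_of_deriv_neg' {g : ℝ → ℝ} {a b : ℝ} (hab : a ≤ b)
    (hc : ContinuousOn g (Set.Icc a b))
    (hd : ∀ x ∈ Set.Ioo a b, deriv g x < 0) :
    g '' Set.Ioo a b = Set.Ioo (g b) (g a) := by
  have hmono : StrictAntiOn g (Set.Icc a b) := by
    apply strictAntiOn_of_deriv_neg (convex_Icc a b) hc
    rwa [interior_Icc]
  apply Set.Subset.antisymm
  · rintro _ ⟨x, hx, rfl⟩
    exact ⟨hmono (Set.mem_Icc_of_Ioo hx) (Set.right_mem_Icc.2 hab) hx.2,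
      hmono (Set.left_mem_Icc.2 hab) (Set.mem_Icc_of_Ioo hx) hx.1⟩
  · exact intermediate_value_Ioo' hab hc

/-- Two injective analytic immersive embedded curves into a
finite-dimensional space (serving, via a chart, as the analytic manifold `M`)
whose images meet along sequences accumulating at interior points coincide on
open subintervals around those points. -/
theorem analytic_curves_locally_coincide
    {E : Type*} [NormedAddCommGroup E] [NormedSpace ℝ E] [FiniteDimensional ℝ E]
    (I I' : Set ℝ) (hIo : IsOpen I) (hI'o : IsOpen I')
    (hIc : IsPreconnected I) (hI'c : IsPreconnected I')
    (γ γ' : ℝ → E)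
    (hγa : AnalyticOnNhd ℝ γ I) (hγ'a : AnalyticOnNhd ℝ γ' I')
    (hγim : ∀ s ∈ I, deriv γ s ≠ 0) (hγ'im : ∀ s ∈ I', deriv γ' s ≠ 0)
    (hγinj : Set.InjOn γ I) (hγ'inj : Set.InjOn γ' I')
    (hγemb : Topology.IsEmbedding (I.restrict γ))
    (hγ'emb : Topology.IsEmbedding (I'.restrict γ'))
    (t : ℝ) (ht : t ∈ I) (t' : ℝ) (ht' : t' ∈ I')
    (u u' : ℕ → ℝ)
    (hu : ∀ n, u n ∈ I \ {t}) (hu' : ∀ n, u' n ∈ I' \ {t'})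
    (hul : Tendsto u atTop (𝓝 t)) (hu'l : Tendsto u' atTop (𝓝 t'))
    (heq : ∀ n, γ (u n) = γ' (u' n)) :
    ∃ J J' : Set ℝ, IsOpen J ∧ IsOpen J' ∧ IsPreconnected J ∧ IsPreconnected J' ∧
      t ∈ J ∧ t' ∈ J' ∧ J ⊆ I ∧ J' ⊆ I' ∧ γ '' J = γ' '' J' := by
  classical
  -- the base points have the same image
  have hγeq : γ t = γ' t' := by
    have hA : Tendsto (fun n => γ (u n)) atTop (𝓝 (γ t)) :=
      ((hγa t ht).continuousAt.tendsto).comp hul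
    have hB : Tendsto (fun n => γ' (u' n)) atTop (𝓝 (γ' t')) :=
      ((hγ'a t' ht').continuousAt.tendsto).comp hu'l
    exact tendsto_nhds_unique hA ((funext heq : (fun n => γ (u n)) = _) ▸ hB)
  -- a linear functional not vanishing on the velocity of `γ` at `t`
  obtain ⟨ℓ, -, hℓval⟩ := exists_dual_vector ℝ (deriv γ t) (norm_ne_zero_iff.2 (hγim t ht))
  have hc : ℓ (deriv γ t) ≠ 0 := by
    rw [hℓval]
    exact_mod_cast norm_ne_zero_iff.2 (hγim t ht)
  set h : ℝ → ℝ := fun s => ℓ (γ s) with hh_def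
  have hh : AnalyticAt ℝ h t := (ℓ.analyticAt (γ t)).comp (hγa t ht)
  have hderiv_h : HasDerivAt h (ℓ (deriv γ t)) t :=
    (ℓ.hasFDerivAt).comp_hasDerivAt t (hγa t ht).differentiableAt.hasDerivAt
  set i : ℝ ≃L[ℝ] ℝ := ContinuousLinearEquiv.unitsEquivAut ℝ (Units.mk0 _ hc) with hi_def
  have hfd : fderiv ℝ h t = (i : ℝ →L[ℝ] ℝ) := by
    apply ContinuousLinearMap.ext_ring
    show fderiv ℝ h t 1 = i 1
    rw [fderiv_apply_one_eq_deriv, hderiv_h.deriv]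
    simp [hi_def, ContinuousLinearEquiv.unitsEquivAut_apply]
  have hstrict : HasStrictFDerivAt h (i : ℝ →L[ℝ] ℝ) t := hfd ▸ hh.hasStrictFDerivAt
  set PH := hstrict.toOpenPartialHomeomorph h with hPH_def
  have hmem : t ∈ PH.source := hstrict.mem_toOpenPartialHomeomorph_source
  have hPHcoe : ⇑PH = h := hstrict.toOpenPartialHomeomorph_coe
  set ψ := PH.symm with hψ_def
  have hψa : AnalyticAt ℝ ψ (h t) := by
    have := PH.analyticAt_symm' (i := i) hmem (by rw [hPHcoe]; exact hh)
      (by rw [hPHcoe]; exact hfd)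
    rwa [hPHcoe] at this
  have hψht : ψ (h t) = t := by
    have := PH.left_inv hmem
    rwa [hPHcoe] at this
  have hleft : ∀ᶠ s in 𝓝 t, ψ (h s) = s := by
    have := PH.eventually_left_inverse hmem
    rwa [hPHcoe] at this
  -- the reparametrization `g` and the candidate `f = γ ∘ g`
  have hℓγ' : ℓ (γ' t') = h t := by rw [hh_def, ← hγeq]
  set g : ℝ → ℝ := fun s => ψ (ℓ (γ' s)) with hg_def
  have hg_t' : g t' = t := by rw [hg_def]; simp only; rw [hℓγ', hψht]
  have hga : AnalyticAt ℝ g t' := by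
    have h1 : AnalyticAt ℝ (fun s => ℓ (γ' s)) t' := (ℓ.analyticAt _).comp (hγ'a t' ht')
    have hψa' : AnalyticAt ℝ ψ (ℓ (γ' t')) := by rw [hℓγ']; exact hψa
    exact AnalyticAt.comp (g := ψ) (f := fun s => ℓ (γ' s)) (x := t') hψa' h1
  set f : ℝ → E := fun s => γ (g s) with hf_def
  have hγgt' : AnalyticAt ℝ γ (g t') := by rw [hg_t']; exact hγa t ht
  have hfa : AnalyticAt ℝ f t' := hγgt'.comp hga
  -- `f` agrees with `γ'` along `u'`
  have hseq : ∀ᶠ n in atTop, f (u' n) = γ' (u' n) := by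
    filter_upwards [hul.eventually hleft] with n hn
    have h2 : ℓ (γ' (u' n)) = h (u n) := by rw [hh_def, ← heq n]
    rw [hf_def, hg_def]
    simp only
    rw [h2, hn, heq n]
  have htends : Tendsto u' atTop (𝓝[≠] t') := by
    apply tendsto_nhdsWithin_of_tendsto_nhds_of_eventually_within _ hu'l
    exact Eventually.of_forall fun n => (hu' n).2
  have hfreq : ∃ᶠ z in 𝓝[≠] t', f z = γ' z := htends.frequently hseq.frequently
  -- identity theorem on a small ball around `t'`
  have hopen : ∀ᶠ y in 𝓝 t', AnalyticAt ℝ f y := hfa.eventually_analyticAt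
  obtain ⟨r, hr0, hrsub⟩ :=
    Metric.mem_nhds_iff.1 (inter_mem (hI'o.mem_nhds ht') hopen)
  have hB'sub : Metric.ball t' r ⊆ I' := fun x hx => (hrsub hx).1
  have hfB : AnalyticOnNhd ℝ f (Metric.ball t' r) := fun x hx => (hrsub hx).2
  have hγ'B : AnalyticOnNhd ℝ γ' (Metric.ball t' r) := fun x hx => hγ'a x (hB'sub hx)
  have hEq : Set.EqOn f γ' (Metric.ball t' r) :=
    hfB.eqOn_of_preconnected_of_frequently_eq hγ'B (convex_ball t' r).isPreconnected
      (Metric.mem_ball_self hr0) hfreq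
  -- the derivative of `g` at `t'` is nonzero
  have hEqnhds : f =ᶠ[𝓝 t'] γ' :=
    eventuallyEq_of_mem (Metric.ball_mem_nhds t' hr0) hEq
  have hderiv_g : HasDerivAt g (deriv g t') t' := hga.differentiableAt.hasDerivAt
  have hderiv_f : HasDerivAt f (deriv g t' • deriv γ t) t' := by
    have h1 : HasDerivAt γ (deriv γ t) (g t') := by
      rw [hg_t']; exact (hγa t ht).differentiableAt.hasDerivAt
    exact h1.scomp t' hderiv_g
  have hgd0 : deriv g t' ≠ 0 := by
    intro h0
    have h3 : deriv γ' t' = deriv g t' • deriv γ t := by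
      rw [← hEqnhds.deriv_eq, hderiv_f.deriv]
    rw [h0, zero_smul] at h3
    exact hγ'im t' ht' h3
  -- continuity of `deriv g` near `t'`
  obtain ⟨r₁, hr₁0, hr₁sub⟩ := Metric.mem_nhds_iff.1 hga.eventually_analyticAt
  have hgB : AnalyticOnNhd ℝ g (Metric.ball t' r₁) := fun x hx => hr₁sub hx
  have hdgB : AnalyticOnNhd ℝ (deriv g) (Metric.ball t' r₁) := hgB.deriv
  have hdgc : ContinuousAt (deriv g) t' :=
    (hdgB t' (Metric.mem_ball_self hr₁0)).continuousAt
  -- big neighborhood with all needed properties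
  obtain ⟨ε, hε0, hεI⟩ := Metric.isOpen_iff.1 hIo t ht
  have hpre : g ⁻¹' (Metric.ball t ε) ∈ 𝓝 t' := by
    apply hga.continuousAt.preimage_mem_nhds
    rw [hg_t']
    exact Metric.ball_mem_nhds t hε0
  obtain ⟨T, hTmem, hTsign⟩ :
      ∃ T ∈ 𝓝 t', (∀ x ∈ T, 0 < deriv g x) ∨ (∀ x ∈ T, deriv g x < 0) := by
    rcases hgd0.lt_or_gt with hneg | hpos
    · exact ⟨_, hdgc.preimage_mem_nhds (Iio_mem_nhds hneg), Or.inr fun x hx => hx⟩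
    · exact ⟨_, hdgc.preimage_mem_nhds (Ioi_mem_nhds hpos), Or.inl fun x hx => hx⟩
  have hS : (Metric.ball t' r ∩ Metric.ball t' r₁ ∩ g ⁻¹' (Metric.ball t ε)) ∩ T ∈ 𝓝 t' :=
    inter_mem (inter_mem (inter_mem (Metric.ball_mem_nhds t' hr0)
      (Metric.ball_mem_nhds t' hr₁0)) hpre) hTmem
  obtain ⟨δ, hδ0, hδsub⟩ := Metric.mem_nhds_iff.1 hS
  set a := t' - δ / 2 with ha_def
  set b := t' + δ / 2 with hb_def
  have hab : a ≤ b := by rw [ha_def, hb_def]; linarith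
  have hta : a < t' := by rw [ha_def]; linarith
  have htb : t' < b := by rw [hb_def]; linarith
  have hIccδ : Set.Icc a b ⊆ Metric.ball t' δ := by
    rw [Real.ball_eq_Ioo]
    exact Set.Icc_subset_Ioo (by rw [ha_def]; linarith) (by rw [hb_def]; linarith)
  have hIccS : Set.Icc a b ⊆
      (Metric.ball t' r ∩ Metric.ball t' r₁ ∩ g ⁻¹' (Metric.ball t ε)) ∩ T :=
    hIccδ.trans hδsub
  have hcont : ContinuousOn g (Set.Icc a b) := fun x hx =>
    ((hgB x (hIccS hx).1.1.2).continuousAt).continuousWithinAt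
  obtain ⟨c, d, himg⟩ : ∃ c d : ℝ, g '' Set.Ioo a b = Set.Ioo c d := by
    rcases hTsign with hp | hn
    · exact ⟨g a, g b, image_Ioo_of_deriv_pos' hab hcont
        (fun x hx => hp _ (hIccS (Set.mem_Icc_of_Ioo hx)).2)⟩
    · exact ⟨g b, g a, image_Ioo_of_deriv_neg' hab hcont
        (fun x hx => hn _ (hIccS (Set.mem_Icc_of_Ioo hx)).2)⟩
  refine ⟨Set.Ioo c d, Set.Ioo a b, isOpen_Ioo, isOpen_Ioo, isPreconnected_Ioo,
    isPreconnected_Ioo, ?_, ⟨hta, htb⟩, ?_, ?_, ?_⟩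
  · rw [← himg]
    exact ⟨t', ⟨hta, htb⟩, hg_t'⟩
  · rw [← himg]
    rintro _ ⟨x, hx, rfl⟩
    exact hεI (hIccS (Set.mem_Icc_of_Ioo hx)).1.2
  · exact fun x hx => hB'sub (hIccS (Set.mem_Icc_of_Ioo hx)).1.1.1
  · rw [← himg, ← Set.image_comp]
    exact Set.EqOn.image_eq fun x hx => hEq (hIccS (Set.mem_Icc_of_Ioo hx)).1.1.1
end

section
/- Let G be a group, G_S ≤ G a subgroup invariant under conjugation by g₁ and g₋₁ and their inverses, and suppose g₁² ∈ G_S, g₋₁² ∈ G_S (modulo G_S: [g_{±1}] = [g_{±1}^{-1}]). Then for every n ∈ ℕ, the element q_n⁺ := (g₋₁ g₁)ⁿ (g₁ g₋₁)ⁿ lies in G_S. -/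
/-- If the subgroup `G_S` is invariant under conjugation by `g₁`,
`g₋₁` and their inverses, and `g₁² ∈ G_S`, `g₋₁² ∈ G_S` (i.e. `[g_{±1}] = [g_{±1}⁻¹]`
modulo `G_S`), then `q_n⁺ := (g₋₁ g₁)ⁿ (g₁ g₋₁)ⁿ ∈ G_S` for every `n ∈ ℕ`. -/
theorem q_n_mem_stabilizer
    {G : Type*} [Group G] (GS : Subgroup G) (g1 gm1 : G)
    (hc1 : ∀ q ∈ GS, g1⁻¹ * q * g1 ∈ GS)
    (hc1' : ∀ q ∈ GS, g1 * q * g1⁻¹ ∈ GS)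
    (hc2 : ∀ q ∈ GS, gm1⁻¹ * q * gm1 ∈ GS)
    (hc2' : ∀ q ∈ GS, gm1 * q * gm1⁻¹ ∈ GS)
    (hsq1 : g1 ^ 2 ∈ GS) (hsq2 : gm1 ^ 2 ∈ GS) :
    ∀ n : ℕ, (gm1 * g1) ^ n * (g1 * gm1) ^ n ∈ GS := by
  have key : ∀ x ∈ GS, gm1 * (g1 * x * g1) * gm1 ∈ GS := by
    intro x hx
    have h1 : g1 * x * g1 ∈ GS := by
      have : g1 * x * g1 = (g1 * x * g1⁻¹) * g1 ^ 2 := by group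
      rw [this]; exact GS.mul_mem (hc1' x hx) hsq1
    have : gm1 * (g1 * x * g1) * gm1 = (gm1 * (g1 * x * g1) * gm1⁻¹) * gm1 ^ 2 := by
      group
    rw [this]; exact GS.mul_mem (hc2' _ h1) hsq2
  intro n
  induction n with
  | zero => simpa using GS.one_mem
  | succ n ih =>
    have heq : (gm1 * g1) ^ (n + 1) * (g1 * gm1) ^ (n + 1)
        = gm1 * (g1 * ((gm1 * g1) ^ n * (g1 * gm1) ^ n) * g1) * gm1 := by
      rw [pow_succ', pow_succ]; group
    rw [heq]; exact key _ ih
end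

section
/- Define σ : ℤ \ {0} → {−1, 1} by σ(n) = (−1)^{n−1} for n > 0 and σ(n) = (−1)^n for n < 0. Let G be a group with subgroup G_S, and g₁, g₋₁ ∈ G with [g_{±1}] = [g_{±1}^{-1}] in G/G_S, G_S invariant under the relevant conjugations, and set h_n defined by [h_n] = [g_{−1}(g_1 g_{−1})^{|n|−1}] for n ≤ −1 and [h_n] = [g_1 (g_{−1} g_1)^{n−1}] for n ≥ 1. Then the cosets g_n defined by g_n = h_n h_{n−1} ⋯ h_1 (for n ≥ 1) satisfy [g_n] = [g_{σ(1)} · g_{σ(2)} ⋯ g_{σ(n)}], i.e. [g_2] = [g_1 g_{−1}], [g_3] = [g_1 g_{−1} g_1], and so on. -/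
/-- The sign function `σ : ℤ \ {0} → {−1, 1}`, `σ(n) = (−1)^{n−1}` for `n > 0` and
`σ(n) = (−1)ⁿ` for `n < 0` (extended arbitrarily at `0`). -/
def sigmaSign (n : ℤ) : ℤ :=
  if 0 < n then (if Odd n then 1 else -1) else (if Even n then 1 else -1)

/-- The descending product `h_n ⋯ h_2 · h_1`. -/
def prodDesc {G : Type*} [Group G] (h : ℕ → G) : ℕ → G
  | 0 => 1
  | n + 1 => h (n + 1) * prodDesc h n

/-- The alternating product `g_{σ(1)} · g_{σ(2)} ⋯ g_{σ(n)}`, i.e.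
`g₁`, `g₁ g₋₁`, `g₁ g₋₁ g₁`, … -/
def altProd {G : Type*} [Group G] (g1 gm1 : G) : ℕ → G
  | 0 => 1
  | k + 1 => altProd g1 gm1 k * (if sigmaSign (k + 1) = 1 then g1 else gm1)

section Aux
variable {G : Type*} [Group G] (g1 gm1 : G)

lemma sig_even (n : ℕ) (he : Even n) : sigmaSign ((n : ℤ) + 1) = 1 := by
  obtain ⟨r, hr⟩ := he
  have hodd : Odd ((n : ℤ) + 1) := ⟨r, by push_cast [hr]; ring⟩
  have hp : (0:ℤ) < (n : ℤ) + 1 := by positivity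
  simp [sigmaSign, hodd, hp]

lemma sig_odd (n : ℕ) (ho : Odd n) : sigmaSign ((n : ℤ) + 1) = -1 := by
  obtain ⟨r, hr⟩ := ho
  have heven : Even ((n : ℤ) + 1) := ⟨r + 1, by push_cast [hr]; ring⟩
  have hno : ¬ Odd ((n : ℤ) + 1) := Int.not_odd_iff_even.mpr heven
  have hp : (0:ℤ) < (n : ℤ) + 1 := by positivity
  simp [sigmaSign, hno, hp]

lemma hsc (k : ℕ) : g1 * (gm1 * g1) ^ k = (g1 * gm1) ^ k * g1 :=
  (SemiconjBy.pow_right (by simp [SemiconjBy, mul_assoc]) k)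

lemma hconjc (k : ℕ) : (gm1 * g1) ^ k = g1⁻¹ * (g1 * gm1) ^ k * g1 := by
  rw [mul_assoc, ← hsc, ← mul_assoc]
  simp

lemma altProd_even (m : ℕ) : altProd g1 gm1 (m + m) = (g1 * gm1) ^ m ∧
    altProd g1 gm1 (m + m + 1) = (g1 * gm1) ^ m * g1 := by
  induction m with
  | zero =>
    have h1 : sigmaSign 1 = 1 := by simp [sigmaSign]
    refine ⟨by simp [altProd], ?_⟩
    simp [altProd, h1]
  | succ m ih =>
    have h1 : m + 1 + (m + 1) = (m + m + 1) + 1 := by ring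
    have h2 : altProd g1 gm1 (m + 1 + (m + 1)) = (g1 * gm1) ^ (m + 1) := by
      rw [h1]
      show altProd g1 gm1 (m + m + 1) * _ = _
      rw [ih.2, sig_odd (m + m + 1) ⟨m, by ring⟩]
      norm_num [pow_succ, mul_assoc]
    refine ⟨h2, ?_⟩
    show altProd g1 gm1 (m + 1 + (m + 1)) * _ = _
    rw [h2, sig_even (m + 1 + (m + 1)) ⟨m + 1, rfl⟩]
    simp

end Aux

/-- With `[g_{±1}] = [g_{±1}⁻¹]` modulo `G_S` (i.e. `g_{±1}² ∈ G_S`),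
`G_S` invariant under the relevant conjugations, and `h_n` in the class of
`g₁ (g₋₁ g₁)^{n−1}` for `n ≥ 1`, the elements `g_n = h_n h_{n−1} ⋯ h_1` satisfy
`[g_n] = [g_{σ(1)} g_{σ(2)} ⋯ g_{σ(n)}]`, i.e. `[g₂] = [g₁ g₋₁]`, `[g₃] = [g₁ g₋₁ g₁]`,
and so on. -/
theorem negative_decomp_class_formula
    {G : Type*} [Group G] (GS : Subgroup G) (g1 gm1 : G)
    (hconj : ∀ x ∈ Subgroup.closure ({g1, gm1} : Set G), ∀ q ∈ GS, x⁻¹ * q * x ∈ GS)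
    (hsq1 : g1 ^ 2 ∈ GS) (hsq2 : gm1 ^ 2 ∈ GS)
    (h : ℕ → G)
    (hh : ∀ k : ℕ, 1 ≤ k → (h k)⁻¹ * (g1 * (gm1 * g1) ^ (k - 1)) ∈ GS) :
    ∀ n : ℕ, 1 ≤ n → (prodDesc h n)⁻¹ * altProd g1 gm1 n ∈ GS := by
  set Hc := Subgroup.closure ({g1, gm1} : Set G) with hHc
  have hg1 : g1 ∈ Hc := Subgroup.subset_closure (by simp)
  have hgm1 : gm1 ∈ Hc := Subgroup.subset_closure (by simp)
  have hconj' : ∀ x ∈ Hc, ∀ q ∈ GS, x * q * x⁻¹ ∈ GS := by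
    intro x hx q hq
    simpa using hconj x⁻¹ (Hc.inv_mem hx) q hq
  -- q lemma
  have hq : ∀ m : ℕ, (gm1 * g1) ^ m * (g1 * gm1) ^ m ∈ GS := by
    intro m
    induction m with
    | zero => simpa using GS.one_mem
    | succ m ih =>
      have hx1 : (gm1 * g1) ^ m * gm1 ∈ Hc :=
        Hc.mul_mem (Hc.pow_mem (Hc.mul_mem hgm1 hg1) m) hgm1
      have hx2 : (gm1 * g1) ^ m ∈ Hc := Hc.pow_mem (Hc.mul_mem hgm1 hg1) m
      have e : (gm1 * g1) ^ (m + 1) * (g1 * gm1) ^ (m + 1)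
          = (((gm1 * g1) ^ m * gm1) * g1 ^ 2 * ((gm1 * g1) ^ m * gm1)⁻¹)
            * ((gm1 * g1) ^ m * gm1 ^ 2 * ((gm1 * g1) ^ m)⁻¹)
            * ((gm1 * g1) ^ m * (g1 * gm1) ^ m) := by
        rw [pow_succ, pow_succ']
        generalize (gm1 * g1) ^ m = X
        generalize (g1 * gm1) ^ m = Y
        simp only [pow_two]
        group
      rw [e]
      exact GS.mul_mem (GS.mul_mem (hconj' _ hx1 _ hsq1) (hconj' _ hx2 _ hsq2)) ih
  -- key lemmas
  have keyE : ∀ m : ℕ, ((g1 * gm1) ^ m)⁻¹ * (g1 * (gm1 * g1) ^ (m + m))⁻¹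
      * (g1 * gm1) ^ m * g1 ∈ GS := by
    intro m
    have e : ((g1 * gm1) ^ m)⁻¹ * (g1 * (gm1 * g1) ^ (m + m))⁻¹
        * (g1 * gm1) ^ m * g1 = ((gm1 * g1) ^ m * (g1 * gm1) ^ m)⁻¹ := by
      rw [hsc g1 gm1 (m + m), pow_add, hconjc g1 gm1 m]
      generalize (g1 * gm1) ^ m = B
      group
    rw [e]
    exact GS.inv_mem (hq m)
  have keyO : ∀ m : ℕ, ((g1 * gm1) ^ m * g1)⁻¹ * (g1 * (gm1 * g1) ^ (m + m + 1))⁻¹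
      * ((g1 * gm1) ^ m * g1) * gm1 ∈ GS := by
    intro m
    have e : ((g1 * gm1) ^ m * g1)⁻¹ * (g1 * (gm1 * g1) ^ (m + m + 1))⁻¹
        * ((g1 * gm1) ^ m * g1) * gm1
        = (g1⁻¹ * ((gm1 * g1) ^ m * (g1 * gm1) ^ m)⁻¹ * g1) * (g1 ^ 2)⁻¹ := by
      have h1 : m + m + 1 = m + 1 + m := by ring
      rw [hsc g1 gm1 (m + m + 1), h1, pow_add, pow_add, pow_one, hconjc g1 gm1 m]
      generalize (g1 * gm1) ^ m = B
      simp only [pow_two]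
      group
    rw [e]
    exact GS.mul_mem (hconj g1 hg1 _ (GS.inv_mem (hq m))) (GS.inv_mem hsq1)
  -- altProd is in Hc
  have hAmem : ∀ n : ℕ, altProd g1 gm1 n ∈ Hc := by
    intro n
    induction n with
    | zero => exact Hc.one_mem
    | succ n ih =>
      show altProd g1 gm1 n * _ ∈ Hc
      exact Hc.mul_mem ih (by split_ifs <;> assumption)
  -- key combined
  have key : ∀ n : ℕ, (altProd g1 gm1 n)⁻¹ * (g1 * (gm1 * g1) ^ n)⁻¹
      * altProd g1 gm1 n * (if sigmaSign ((n : ℤ) + 1) = 1 then g1 else gm1) ∈ GS := by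
    intro n
    rcases Nat.even_or_odd n with ⟨m, hm⟩ | ⟨m, hm⟩
    · subst hm
      rw [(altProd_even g1 gm1 m).1, sig_even (m + m) ⟨m, rfl⟩, if_pos rfl]
      exact keyE m
    · have hm' : n = m + m + 1 := by omega
      subst hm'
      rw [(altProd_even g1 gm1 m).2, sig_odd (m + m + 1) ⟨m, by ring⟩]
      rw [if_neg (by norm_num)]
      exact keyO m
  -- main induction
  have main : ∀ n : ℕ, (prodDesc h n)⁻¹ * altProd g1 gm1 n ∈ GS := by
    intro n
    induction n with
    | zero => simpa [prodDesc, altProd] using GS.one_mem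
    | succ n ih =>
      have hs : (h (n + 1))⁻¹ * (g1 * (gm1 * g1) ^ n) ∈ GS := by
        simpa using hh (n + 1) (by omega)
      have e : (prodDesc h (n + 1))⁻¹ * altProd g1 gm1 (n + 1)
          = ((prodDesc h n)⁻¹ * altProd g1 gm1 n)
            * ((altProd g1 gm1 n)⁻¹ * ((h (n + 1))⁻¹ * (g1 * (gm1 * g1) ^ n))
                * altProd g1 gm1 n)
            * ((altProd g1 gm1 n)⁻¹ * (g1 * (gm1 * g1) ^ n)⁻¹ * altProd g1 gm1 n
                * (if sigmaSign ((n : ℤ) + 1) = 1 then g1 else gm1)) := by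
        simp only [prodDesc, altProd]
        generalize prodDesc h n = P
        generalize altProd g1 gm1 n = A
        generalize (if sigmaSign ((n : ℤ) + 1) = 1 then g1 else gm1) = gg
        generalize (gm1 * g1) ^ n = W
        group
      rw [e]
      exact GS.mul_mem (GS.mul_mem ih (hconj _ (hAmem n) _ hs)) (key n)
  intro n _
  exact main n
end
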